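/- arXiv:2411.14226 — 2 statements merged into one kernel-verified Lean document; each statement's English description precedes it below -/
import Mathlib

section
/- Let ν : ℝ_{≥0} → ℝ_{≥0} be such that ζ ↦ ν(ζ)ζ is strongly monotone with constant m > 0. Then for all vectors b, c ∈ ℝ³: (ν(‖b‖)b − ν(‖c‖)c)·(b − c) ≥ m‖b − c‖². -/
open RealInnerProductSpace

/-- If `ζ ↦ ν(ζ)ζ` is strongly monotone with constant `m > 0` and `ν ≥ 0`, then
the radial vector field `b ↦ ν(‖b‖)b` on `ℝ³` is strongly monotone with the same
constant: `(ν(‖b‖)b − ν(‖c‖)c)·(b − c) ≥ m‖b − c‖²`. -/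
theorem stmt9 (ν : ℝ → ℝ) (m : ℝ) (hm : 0 < m)
    (hνnn : ∀ ζ : ℝ, 0 ≤ ζ → 0 ≤ ν ζ)
    (hmono : ∀ ζ η : ℝ, 0 ≤ ζ → 0 ≤ η →
      (ν ζ * ζ - ν η * η) * (ζ - η) ≥ m * (ζ - η) ^ 2) :
    ∀ b c : EuclideanSpace ℝ (Fin 3),
      ⟪ν ‖b‖ • b - ν ‖c‖ • c, b - c⟫ ≥ m * ‖b - c‖ ^ 2 := by
  intro b c
  have hB : (0:ℝ) ≤ ‖b‖ := norm_nonneg b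
  have hC : (0:ℝ) ≤ ‖c‖ := norm_nonneg c
  have key : ∀ ζ : ℝ, 0 < ζ → m ≤ ν ζ := by
    intro ζ hζ
    have h1 := hmono ζ 0 (le_of_lt hζ) le_rfl
    have hζ2 : 0 < ζ * ζ := mul_pos hζ hζ
    nlinarith
  have hbb : ⟪b, b⟫ = ‖b‖ ^ 2 := real_inner_self_eq_norm_sq b
  have hcc : ⟪c, c⟫ = ‖c‖ ^ 2 := real_inner_self_eq_norm_sq c
  have hbc : ⟪b, c⟫ ≤ ‖b‖ * ‖c‖ := real_inner_le_norm b c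
  have hcb : ⟪c, b⟫ = ⟪b, c⟫ := (real_inner_comm c b).symm
  have hnsub : ‖b - c‖ ^ 2 = ‖b‖ ^ 2 - 2 * ⟪b, c⟫ + ‖c‖ ^ 2 := by
    rw [norm_sub_sq_real]
  have hexp : ⟪ν ‖b‖ • b - ν ‖c‖ • c, b - c⟫
      = ν ‖b‖ * ⟪b, b⟫ - ν ‖b‖ * ⟪b, c⟫ - ν ‖c‖ * ⟪c, b⟫ + ν ‖c‖ * ⟪c, c⟫ := by
    rw [inner_sub_left, inner_sub_right, inner_sub_right, real_inner_smul_left,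
      real_inner_smul_left, real_inner_smul_left, real_inner_smul_left]
    ring
  have habs : |⟪b, c⟫| ≤ ‖b‖ * ‖c‖ := abs_real_inner_le_norm b c
  have hbc' : -(‖b‖ * ‖c‖) ≤ ⟪b, c⟫ := neg_le_of_abs_le habs
  rw [hexp, hbb, hcc, hcb, hnsub]
  rcases eq_or_lt_of_le hB with hB0 | hBpos
  · have hmc := hmono ‖c‖ 0 hC le_rfl
    have hT : ⟪b, c⟫ = 0 := le_antisymm (by nlinarith) (by nlinarith)
    rw [hT, ← hB0]
    nlinarith [hmc]
  rcases eq_or_lt_of_le hC with hC0 | hCpos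
  · have hmb := hmono ‖b‖ 0 hB le_rfl
    have hT : ⟪b, c⟫ = 0 := le_antisymm (by nlinarith) (by nlinarith)
    rw [hT, ← hC0]
    nlinarith [hmb]
  have hνb := key ‖b‖ hBpos
  have hνc := key ‖c‖ hCpos
  have hmono' := hmono ‖b‖ ‖c‖ hB hC
  nlinarith [mul_nonneg (by linarith : (0:ℝ) ≤ ν ‖b‖ + ν ‖c‖ - 2 * m)
    (by linarith : (0:ℝ) ≤ ‖b‖ * ‖c‖ - ⟪b, c⟫)]
end

section
/- Suppose the reduced passive system satisfies ∫₀ᵗ u(τ)ᵀ y_POD(τ) dτ ≥ 0 for all t and all admissible inputs u, and let y_δ(t) = y_POD(t) − Cε(t) + δ(t)u(t), where ‖ε(t)‖ ≤ θ(t) and δ(t) ≥ ‖C‖θ(t)/‖u(t)‖ whenever u(t) ≠ 0 and δ(t) ≥ 0 otherwise. Then ∫₀ᵗ u(τ)ᵀ y_δ(τ) dτ ≥ 0 for all t ∈ [0,T], i.e., the perturbed system is io-passive. -/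
open RealInnerProductSpace MeasureTheory

/-- Passivity enforcement: if the POD-reduced system is io-passive and the
perturbed output is `y_δ(t) = y_POD(t) − Cε(t) + δ(t)u(t)` with `‖ε(t)‖ ≤ θ(t)`
and `δ(t) ≥ ‖C‖θ(t)/‖u(t)‖` whenever `u(t) ≠ 0` (and `δ(t) ≥ 0`), then the
perturbed system is io-passive: `∫₀ᵗ u(τ)ᵀ y_δ(τ) dτ ≥ 0`. -/
theorem stmt13 (n m : ℕ) (T : ℝ) (hT : 0 ≤ T)
    (u yPOD yδ : ℝ → EuclideanSpace ℝ (Fin m))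
    (ε : ℝ → EuclideanSpace ℝ (Fin n))
    (C : EuclideanSpace ℝ (Fin n) →L[ℝ] EuclideanSpace ℝ (Fin m))
    (θ δ : ℝ → ℝ)
    (hθnn : ∀ t ∈ Set.Icc (0 : ℝ) T, 0 ≤ θ t)
    (hpass : ∀ t ∈ Set.Icc (0 : ℝ) T, 0 ≤ ∫ τ in (0:ℝ)..t, ⟪u τ, yPOD τ⟫)
    (hyδ : ∀ t ∈ Set.Icc (0 : ℝ) T, yδ t = yPOD t - C (ε t) + δ t • u t)
    (hθ : ∀ t ∈ Set.Icc (0 : ℝ) T, ‖ε t‖ ≤ θ t)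
    (hδ : ∀ t ∈ Set.Icc (0 : ℝ) T,
      (u t ≠ 0 → ‖C‖ * θ t / ‖u t‖ ≤ δ t) ∧ 0 ≤ δ t)
    (hint1 : ∀ t ∈ Set.Icc (0 : ℝ) T,
      IntervalIntegrable (fun τ => ⟪u τ, yPOD τ⟫) volume 0 t)
    (hint2 : ∀ t ∈ Set.Icc (0 : ℝ) T,
      IntervalIntegrable (fun τ => ⟪u τ, C (ε τ)⟫) volume 0 t)
    (hint3 : ∀ t ∈ Set.Icc (0 : ℝ) T,
      IntervalIntegrable (fun τ => δ τ * ⟪u τ, u τ⟫) volume 0 t) :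
    ∀ t ∈ Set.Icc (0 : ℝ) T, 0 ≤ ∫ τ in (0:ℝ)..t, ⟪u τ, yδ τ⟫ := by

  intro t ht
  obtain ⟨ht0, htT⟩ := ht
  have hsub : Set.Icc (0:ℝ) t ⊆ Set.Icc (0:ℝ) T := Set.Icc_subset_Icc le_rfl htT
  -- rewrite integrand on the interval
  have hcongr : ∫ τ in (0:ℝ)..t, ⟪u τ, yδ τ⟫ =
      ∫ τ in (0:ℝ)..t, (⟪u τ, yPOD τ⟫ + (δ τ * ⟪u τ, u τ⟫ - ⟪u τ, C (ε τ)⟫)) := by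
    apply intervalIntegral.integral_congr
    intro τ hτ
    rw [Set.uIcc_of_le ht0] at hτ
    have hτT := hsub hτ
    simp only [hyδ τ hτT]
    rw [inner_add_right, inner_sub_right, inner_smul_right]
    ring
  rw [hcongr]
  have hi2 : IntervalIntegrable (fun τ => δ τ * ⟪u τ, u τ⟫ - ⟪u τ, C (ε τ)⟫) volume 0 t :=
    (hint3 t ⟨ht0, htT⟩).sub (hint2 t ⟨ht0, htT⟩)
  rw [intervalIntegral.integral_add (hint1 t ⟨ht0, htT⟩) hi2]
  have h1 := hpass t ⟨ht0, htT⟩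
  have h2 : 0 ≤ ∫ τ in (0:ℝ)..t, (δ τ * ⟪u τ, u τ⟫ - ⟪u τ, C (ε τ)⟫) := by
    apply intervalIntegral.integral_nonneg ht0
    intro τ hτ
    have hτT := hsub hτ
    have hCε : ‖C (ε τ)‖ ≤ ‖C‖ * θ τ :=
      (C.le_opNorm (ε τ)).trans (mul_le_mul_of_nonneg_left (hθ τ hτT) (norm_nonneg C))
    have hinner : ⟪u τ, C (ε τ)⟫ ≤ ‖u τ‖ * (‖C‖ * θ τ) :=
      (real_inner_le_norm _ _).trans (mul_le_mul_of_nonneg_left hCε (norm_nonneg _))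
    rcases eq_or_ne (u τ) 0 with h0 | h0
    · simp [h0, inner_zero_left, mul_le_mul_of_nonneg_left]
    · have hu : (0:ℝ) < ‖u τ‖ := norm_pos_iff.mpr h0
      have hδτ := (hδ τ hτT).1 h0
      have : ‖C‖ * θ τ ≤ δ τ * ‖u τ‖ := by
        rw [div_le_iff₀ hu] at hδτ
        linarith
      have h3 : ⟪u τ, C (ε τ)⟫ ≤ ‖u τ‖ * (δ τ * ‖u τ‖) :=
        hinner.trans (mul_le_mul_of_nonneg_left this hu.le)
      have h4 : ⟪u τ, u τ⟫ = ‖u τ‖ * ‖u τ‖ := real_inner_self_eq_norm_mul_norm _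
      rw [h4]
      nlinarith
  linarith
end
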